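/- arXiv:1306.3025 — 2 statements merged into one kernel-verified Lean document; each statement's English description precedes it below -/
import Mathlib

section
/- Let V_1, V_2 be finite abelian groups and ν_e : V_1 × V_2 → ℝ≥0, ν_1 : V_1 → ℝ≥0, ν_2 : V_2 → ℝ≥0 weight functions. For F, G : V_1 × V_2 → ℝ define the weighted Gowers inner product ⟨F_00, F_01, F_10, F_11⟩ = E_{x_0,q_0 ∈ V_1} E_{x_1,q_1 ∈ V_2} F_00(x_0,x_1) F_01(x_0,q_1) F_10(q_0,x_1) F_11(q_0,q_1) · ν_e(x_0,x_1)ν_e(x_0,q_1)ν_e(q_0,x_1)ν_e(q_0,q_1) · ν_1(x_0)ν_1(q_0)ν_2(x_1)ν_2(q_1), and ‖F‖^4 = ⟨F,F,F,F⟩. Then |⟨F_00, F_01, F_10, F_11⟩| ≤ ‖F_00‖ ‖F_01‖ ‖F_10‖ ‖F_11‖ (the Gowers–Cauchy–Schwarz inequality for the weighted 2-dimensional box norm). -/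
open Finset

/-- Weighted 2-dimensional Gowers inner product with edge weight `νe` and
vertex weights `ν1`, `ν2` (an average over `x₀,q₀ ∈ V₁`, `x₁,q₁ ∈ V₂`). -/
noncomputable def GIP {V1 V2 : Type*} [Fintype V1] [Fintype V2]
    (νe : V1 → V2 → ℝ) (ν1 : V1 → ℝ) (ν2 : V2 → ℝ)
    (F00 F01 F10 F11 : V1 → V2 → ℝ) : ℝ :=
  (∑ x0, ∑ q0, ∑ x1, ∑ q1,
      F00 x0 x1 * F01 x0 q1 * F10 q0 x1 * F11 q0 q1 *
      (νe x0 x1 * νe x0 q1 * νe q0 x1 * νe q0 q1) *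
      (ν1 x0 * ν1 q0 * ν2 x1 * ν2 q1)) /
    ((Fintype.card V1 : ℝ) ^ 2 * (Fintype.card V2 : ℝ) ^ 2)

/-- The weighted 2-dimensional box norm: nonnegative fourth root of the
Gowers inner product of `F` with itself. -/
noncomputable def boxNorm {V1 V2 : Type*} [Fintype V1] [Fintype V2]
    (νe : V1 → V2 → ℝ) (ν1 : V1 → ℝ) (ν2 : V2 → ℝ) (F : V1 → V2 → ℝ) : ℝ :=
  (GIP νe ν1 ν2 F F F F) ^ ((1 : ℝ) / 4)

lemma weighted_cs {ι : Type*} [Fintype ι] (w f g : ι → ℝ) (hw : ∀ i, 0 ≤ w i) :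
    (∑ i, w i * (f i * g i)) ^ 2 ≤ (∑ i, w i * f i ^ 2) * (∑ i, w i * g i ^ 2) := by
  have h := Finset.sum_mul_sq_le_sq_mul_sq Finset.univ
    (fun i => Real.sqrt (w i) * f i) (fun i => Real.sqrt (w i) * g i)
  have e1 : ∀ i : ι, (Real.sqrt (w i) * f i) * (Real.sqrt (w i) * g i) = w i * (f i * g i) := by
    intro i
    rw [show (Real.sqrt (w i) * f i) * (Real.sqrt (w i) * g i)
        = (Real.sqrt (w i) * Real.sqrt (w i)) * (f i * g i) by ring,
      Real.mul_self_sqrt (hw i)]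
  have e2 : ∀ i : ι, (Real.sqrt (w i) * f i) ^ 2 = w i * f i ^ 2 := by
    intro i; rw [mul_pow, Real.sq_sqrt (hw i)]
  have e3 : ∀ i : ι, (Real.sqrt (w i) * g i) ^ 2 = w i * g i ^ 2 := by
    intro i; rw [mul_pow, Real.sq_sqrt (hw i)]
  simpa only [e1, e2, e3] using h

lemma sum_swap4 {α β : Type*} [Fintype α] [Fintype β] (f : α → α → β → β → ℝ) :
    ∑ x0, ∑ q0, ∑ x1, ∑ q1, f x0 q0 x1 q1 = ∑ x1, ∑ q1, ∑ x0, ∑ q0, f x0 q0 x1 q1 :=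
  calc ∑ x0, ∑ q0, ∑ x1, ∑ q1, f x0 q0 x1 q1
      = ∑ x0, ∑ x1, ∑ q0, ∑ q1, f x0 q0 x1 q1 :=
        Finset.sum_congr rfl fun _ _ => Finset.sum_comm ..
    _ = ∑ x1, ∑ x0, ∑ q0, ∑ q1, f x0 q0 x1 q1 := Finset.sum_comm ..
    _ = ∑ x1, ∑ x0, ∑ q1, ∑ q0, f x0 q0 x1 q1 :=
        Finset.sum_congr rfl fun _ _ => Finset.sum_congr rfl fun _ _ => Finset.sum_comm ..
    _ = ∑ x1, ∑ q1, ∑ x0, ∑ q0, f x0 q0 x1 q1 :=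
        Finset.sum_congr rfl fun _ _ => Finset.sum_comm ..

lemma rearrange_inner {α β : Type*} [Fintype α] [Fintype β]
    (w : α → α → ℝ) (c d : β → α → α → ℝ) :
    ∑ x0 : α, ∑ q0 : α, ∑ x1 : β, ∑ q1 : β, (c x1 x0 q0 * d q1 x0 q0 * w x0 q0)
      = ∑ p : α × α, w p.1 p.2 * ((∑ x1, c x1 p.1 p.2) * (∑ q1, d q1 p.1 p.2)) := by
  rw [Fintype.sum_prod_type]
  refine Finset.sum_congr rfl fun x0 _ => Finset.sum_congr rfl fun q0 _ => ?_
  rw [Finset.sum_mul_sum, Finset.mul_sum]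
  refine Finset.sum_congr rfl fun x1 _ => ?_
  rw [Finset.mul_sum]
  exact Finset.sum_congr rfl fun q1 _ => by ring

lemma rearrange_outer {α β : Type*} [Fintype α] [Fintype β]
    (w : β → β → ℝ) (a b : α → β → β → ℝ) :
    ∑ x0 : α, ∑ q0 : α, ∑ x1 : β, ∑ q1 : β, (a x0 x1 q1 * b q0 x1 q1 * w x1 q1)
      = ∑ p : β × β, w p.1 p.2 * ((∑ x0, a x0 p.1 p.2) * (∑ q0, b q0 p.1 p.2)) := by
  rw [sum_swap4, Fintype.sum_prod_type]
  refine Finset.sum_congr rfl fun x1 _ => Finset.sum_congr rfl fun q1 _ => ?_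
  rw [Finset.sum_mul_sum, Finset.mul_sum]
  refine Finset.sum_congr rfl fun x0 _ => ?_
  rw [Finset.mul_sum]
  exact Finset.sum_congr rfl fun q0 _ => by ring

/-- Numerator of the Gowers inner product. -/
noncomputable def Snum {V1 V2 : Type*} [Fintype V1] [Fintype V2]
    (νe : V1 → V2 → ℝ) (ν1 : V1 → ℝ) (ν2 : V2 → ℝ)
    (F00 F01 F10 F11 : V1 → V2 → ℝ) : ℝ :=
  ∑ x0, ∑ q0, ∑ x1, ∑ q1,
      F00 x0 x1 * F01 x0 q1 * F10 q0 x1 * F11 q0 q1 *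
      (νe x0 x1 * νe x0 q1 * νe q0 x1 * νe q0 q1) *
      (ν1 x0 * ν1 q0 * ν2 x1 * ν2 q1)

section Main

variable {V1 V2 : Type*} [Fintype V1] [Fintype V2]
variable (νe : V1 → V2 → ℝ) (ν1 : V1 → ℝ) (ν2 : V2 → ℝ)

/-- First Cauchy–Schwarz step, over the `V1` variables. -/
lemma CS1 (hν2 : ∀ y, 0 ≤ ν2 y) (F00 F01 F10 F11 : V1 → V2 → ℝ) :
    (Snum νe ν1 ν2 F00 F01 F10 F11) ^ 2 ≤
      Snum νe ν1 ν2 F00 F01 F00 F01 * Snum νe ν1 ν2 F10 F11 F10 F11 := by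
  set a : V1 → V2 → V2 → ℝ :=
    fun x0 x1 q1 => ν1 x0 * (F00 x0 x1 * F01 x0 q1 * (νe x0 x1 * νe x0 q1)) with ha
  set b : V1 → V2 → V2 → ℝ :=
    fun q0 x1 q1 => ν1 q0 * (F10 q0 x1 * F11 q0 q1 * (νe q0 x1 * νe q0 q1)) with hb
  set w : V2 → V2 → ℝ := fun x1 q1 => ν2 x1 * ν2 q1 with hw
  have key : ∀ (G0 G1 H0 H1 : V1 → V2 → ℝ),
      Snum νe ν1 ν2 G0 G1 H0 H1
        = ∑ x0, ∑ q0, ∑ x1, ∑ q1,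
            ((ν1 x0 * (G0 x0 x1 * G1 x0 q1 * (νe x0 x1 * νe x0 q1)))
              * (ν1 q0 * (H0 q0 x1 * H1 q0 q1 * (νe q0 x1 * νe q0 q1)))
              * (ν2 x1 * ν2 q1)) := by
    intro G0 G1 H0 H1
    unfold Snum
    refine Finset.sum_congr rfl fun x0 _ => Finset.sum_congr rfl fun q0 _ =>
      Finset.sum_congr rfl fun x1 _ => Finset.sum_congr rfl fun q1 _ => by ring
  have e0 : Snum νe ν1 ν2 F00 F01 F10 F11
      = ∑ p : V2 × V2, w p.1 p.2 * ((∑ x0, a x0 p.1 p.2) * (∑ q0, b q0 p.1 p.2)) := by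
    rw [key]; exact rearrange_outer w a b
  have eA : Snum νe ν1 ν2 F00 F01 F00 F01
      = ∑ p : V2 × V2, w p.1 p.2 * (∑ x0, a x0 p.1 p.2) ^ 2 := by
    rw [key, rearrange_outer w a a]
    exact Finset.sum_congr rfl fun p _ => by rw [sq]
  have eB : Snum νe ν1 ν2 F10 F11 F10 F11
      = ∑ p : V2 × V2, w p.1 p.2 * (∑ q0, b q0 p.1 p.2) ^ 2 := by
    rw [key, rearrange_outer w b b]
    exact Finset.sum_congr rfl fun p _ => by rw [sq]
  rw [e0, eA, eB]
  exact weighted_cs (fun p : V2 × V2 => w p.1 p.2)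
    (fun p => ∑ x0, a x0 p.1 p.2) (fun p => ∑ q0, b q0 p.1 p.2)
    (fun p => mul_nonneg (hν2 _) (hν2 _))

/-- Second Cauchy–Schwarz step, over the `V2` variables. -/
lemma CS2 (hν1 : ∀ x, 0 ≤ ν1 x) (F G : V1 → V2 → ℝ) :
    (Snum νe ν1 ν2 F G F G) ^ 2 ≤
      Snum νe ν1 ν2 F F F F * Snum νe ν1 ν2 G G G G := by
  set c : V2 → V1 → V1 → ℝ :=
    fun x1 x0 q0 => ν2 x1 * (F x0 x1 * F q0 x1 * (νe x0 x1 * νe q0 x1)) with hc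
  set d : V2 → V1 → V1 → ℝ :=
    fun q1 x0 q0 => ν2 q1 * (G x0 q1 * G q0 q1 * (νe x0 q1 * νe q0 q1)) with hd
  set w : V1 → V1 → ℝ := fun x0 q0 => ν1 x0 * ν1 q0 with hw
  have key : ∀ (P Q : V1 → V2 → ℝ),
      Snum νe ν1 ν2 P Q P Q
        = ∑ x0, ∑ q0, ∑ x1, ∑ q1,
            ((ν2 x1 * (P x0 x1 * P q0 x1 * (νe x0 x1 * νe q0 x1)))
              * (ν2 q1 * (Q x0 q1 * Q q0 q1 * (νe x0 q1 * νe q0 q1)))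
              * (ν1 x0 * ν1 q0)) := by
    intro P Q
    unfold Snum
    refine Finset.sum_congr rfl fun x0 _ => Finset.sum_congr rfl fun q0 _ =>
      Finset.sum_congr rfl fun x1 _ => Finset.sum_congr rfl fun q1 _ => by ring
  have e0 : Snum νe ν1 ν2 F G F G
      = ∑ p : V1 × V1, w p.1 p.2 * ((∑ x1, c x1 p.1 p.2) * (∑ q1, d q1 p.1 p.2)) := by
    rw [key]; exact rearrange_inner w c d
  have eA : Snum νe ν1 ν2 F F F F
      = ∑ p : V1 × V1, w p.1 p.2 * (∑ x1, c x1 p.1 p.2) ^ 2 := by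
    rw [key, rearrange_inner w c c]
    exact Finset.sum_congr rfl fun p _ => by rw [sq]
  have eB : Snum νe ν1 ν2 G G G G
      = ∑ p : V1 × V1, w p.1 p.2 * (∑ q1, d q1 p.1 p.2) ^ 2 := by
    rw [key, rearrange_inner w d d]
    exact Finset.sum_congr rfl fun p _ => by rw [sq]
  rw [e0, eA, eB]
  exact weighted_cs (fun p : V1 × V1 => w p.1 p.2)
    (fun p => ∑ x1, c x1 p.1 p.2) (fun p => ∑ q1, d q1 p.1 p.2)
    (fun p => mul_nonneg (hν1 _) (hν1 _))

end Main

theorem stmt_9 {V1 V2 : Type*} [Fintype V1] [Fintype V2] [Nonempty V1] [Nonempty V2]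
    (νe : V1 → V2 → ℝ) (ν1 : V1 → ℝ) (ν2 : V2 → ℝ)
    (hνe : ∀ x y, 0 ≤ νe x y) (hν1 : ∀ x, 0 ≤ ν1 x) (hν2 : ∀ y, 0 ≤ ν2 y)
    (F00 F01 F10 F11 : V1 → V2 → ℝ)
    (h00 : 0 ≤ GIP νe ν1 ν2 F00 F00 F00 F00)
    (h01 : 0 ≤ GIP νe ν1 ν2 F01 F01 F01 F01)
    (h10 : 0 ≤ GIP νe ν1 ν2 F10 F10 F10 F10)
    (h11 : 0 ≤ GIP νe ν1 ν2 F11 F11 F11 F11) :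
    |GIP νe ν1 ν2 F00 F01 F10 F11| ≤
      boxNorm νe ν1 ν2 F00 * boxNorm νe ν1 ν2 F01 *
        boxNorm νe ν1 ν2 F10 * boxNorm νe ν1 ν2 F11 := by
  have hD : (0:ℝ) < (Fintype.card V1 : ℝ) ^ 2 * (Fintype.card V2 : ℝ) ^ 2 := by
    have h1 : (0:ℝ) < (Fintype.card V1 : ℝ) := by
      exact_mod_cast Fintype.card_pos
    have h2 : (0:ℝ) < (Fintype.card V2 : ℝ) := by
      exact_mod_cast Fintype.card_pos
    positivity
  set D : ℝ := (Fintype.card V1 : ℝ) ^ 2 * (Fintype.card V2 : ℝ) ^ 2 with hDdef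
  have hGIP : ∀ (A B C E : V1 → V2 → ℝ),
      GIP νe ν1 ν2 A B C E = Snum νe ν1 ν2 A B C E / D := fun _ _ _ _ => rfl
  -- Gowers-Cauchy-Schwarz at the level of numerators
  have h1 := CS1 νe ν1 ν2 hν2 F00 F01 F10 F11
  have h2 := CS2 νe ν1 ν2 hν1 F00 F01
  have h3 := CS2 νe ν1 ν2 hν1 F10 F11
  set S := Snum νe ν1 ν2 F00 F01 F10 F11 with hS
  have hkey : S ^ 4 ≤ Snum νe ν1 ν2 F00 F00 F00 F00 * Snum νe ν1 ν2 F01 F01 F01 F01 *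
      (Snum νe ν1 ν2 F10 F10 F10 F10 * Snum νe ν1 ν2 F11 F11 F11 F11) := by
    calc S ^ 4 = (S ^ 2) ^ 2 := by ring
      _ ≤ (Snum νe ν1 ν2 F00 F01 F00 F01 * Snum νe ν1 ν2 F10 F11 F10 F11) ^ 2 :=
          pow_le_pow_left₀ (sq_nonneg _) h1 2
      _ = (Snum νe ν1 ν2 F00 F01 F00 F01) ^ 2 * (Snum νe ν1 ν2 F10 F11 F10 F11) ^ 2 := by ring
      _ ≤ _ := mul_le_mul h2 h3 (sq_nonneg _) (le_trans (sq_nonneg _) h2)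
  -- pass to GIPs
  have habs : |GIP νe ν1 ν2 F00 F01 F10 F11| ^ 4 ≤
      GIP νe ν1 ν2 F00 F00 F00 F00 * GIP νe ν1 ν2 F01 F01 F01 F01 *
        (GIP νe ν1 ν2 F10 F10 F10 F10 * GIP νe ν1 ν2 F11 F11 F11 F11) := by
    have e : |GIP νe ν1 ν2 F00 F01 F10 F11| ^ 4 = (S / D) ^ 4 := by
      rw [← abs_pow, hGIP]
      exact abs_of_nonneg (by positivity)
    rw [e]
    simp only [hGIP]
    rw [div_pow, div_mul_div_comm, div_mul_div_comm, div_mul_div_comm,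
      show D * D * (D * D) = D ^ 4 by ring]
    exact div_le_div_of_nonneg_right hkey (by positivity)
  set G := GIP νe ν1 ν2 F00 F01 F10 F11 with hG
  have h4 : |G| = (|G| ^ (4:ℕ)) ^ ((1:ℝ)/4) := by
    rw [← Real.rpow_natCast |G| 4, ← Real.rpow_mul (abs_nonneg _)]
    norm_num
  calc |G| = (|G| ^ (4:ℕ)) ^ ((1:ℝ)/4) := h4
    _ ≤ (GIP νe ν1 ν2 F00 F00 F00 F00 * GIP νe ν1 ν2 F01 F01 F01 F01 *
          (GIP νe ν1 ν2 F10 F10 F10 F10 * GIP νe ν1 ν2 F11 F11 F11 F11)) ^ ((1:ℝ)/4) :=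
        Real.rpow_le_rpow (by positivity) habs (by norm_num)
    _ = boxNorm νe ν1 ν2 F00 * boxNorm νe ν1 ν2 F01 *
          boxNorm νe ν1 ν2 F10 * boxNorm νe ν1 ν2 F11 := by
        rw [Real.mul_rpow (by positivity) (mul_nonneg h10 h11),
          Real.mul_rpow h00 h01, Real.mul_rpow h10 h11]
        unfold boxNorm
        ring
end

section
/- Let m be a positive integer and let μ_i(q_1), μ_i(q_2), a_i(q_1), a_i(q_2) (1 ≤ i ≤ m) be real numbers in [0,1] with a_i(q_j) ≤ μ_i(q_j). Suppose ε := Σ_{i=1}^m (|a_i(q_2) − a_i(q_1)| + |μ_i(q_2) − μ_i(q_1)|) ≤ 1. Define r_i(q_j) = a_i(q_j)/μ_i(q_j) if μ_i(q_j) > 0 and r_i(q_j) = 1 otherwise. Then Σ_{i=1}^m (r_i(q_2) − r_i(q_1))^2 μ_i(q_2) ≤ 15 m ε^{1/4}. -/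
theorem stmt_12 {m : ℕ} (hm : 1 ≤ m)
    (μ1 μ2 a1 a2 : Fin m → ℝ)
    (hμ1 : ∀ i, μ1 i ∈ Set.Icc (0 : ℝ) 1) (hμ2 : ∀ i, μ2 i ∈ Set.Icc (0 : ℝ) 1)
    (ha1 : ∀ i, a1 i ∈ Set.Icc (0 : ℝ) (μ1 i)) (ha2 : ∀ i, a2 i ∈ Set.Icc (0 : ℝ) (μ2 i))
    (hε : (∑ i, (|a2 i - a1 i| + |μ2 i - μ1 i|)) ≤ 1) :
    (∑ i, ((if 0 < μ2 i then a2 i / μ2 i else 1) -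
        (if 0 < μ1 i then a1 i / μ1 i else 1)) ^ 2 * μ2 i) ≤
      15 * m * (∑ i, (|a2 i - a1 i| + |μ2 i - μ1 i|)) ^ ((1 : ℝ) / 4) := by
  set ε := ∑ i, (|a2 i - a1 i| + |μ2 i - μ1 i|) with hεdef
  have hε0 : 0 ≤ ε := Finset.sum_nonneg (fun i _ => by positivity)
  set E := ε ^ ((1:ℝ)/4) with hEdef
  have hE0 : 0 ≤ E := Real.rpow_nonneg hε0 _
  have hE1 : E ≤ 1 := Real.rpow_le_one hε0 hε (by norm_num)
  have hE4 : E ^ (4:ℕ) = ε := by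
    rw [hEdef, ← Real.rpow_natCast (ε ^ ((1:ℝ)/4)) 4, ← Real.rpow_mul hε0]
    norm_num
  have hεE : ε ≤ E := by
    calc ε = E ^ (4:ℕ) := hE4.symm
      _ ≤ E ^ (1:ℕ) := pow_le_pow_of_le_one hE0 hE1 (by norm_num)
      _ = E := pow_one E
  have hεi : ∀ i, |a2 i - a1 i| + |μ2 i - μ1 i| ≤ ε := by
    intro i
    exact Finset.single_le_sum (f := fun j => |a2 j - a1 j| + |μ2 j - μ1 j|)
      (fun j _ => by positivity) (Finset.mem_univ i)
  clear_value E
  clear_value ε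
  have hr : ∀ (μ a : ℝ), μ ∈ Set.Icc (0:ℝ) 1 → a ∈ Set.Icc (0:ℝ) μ →
      (if 0 < μ then a/μ else 1) ∈ Set.Icc (0:ℝ) 1 := by
    intro μ a hμ ha
    split_ifs with h
    · exact ⟨div_nonneg ha.1 h.le, div_le_one_of_le₀ ha.2 h.le⟩
    · exact ⟨zero_le_one, le_refl 1⟩
  have key : ∀ i, ((if 0 < μ2 i then a2 i / μ2 i else 1) -
      (if 0 < μ1 i then a1 i / μ1 i else 1)) ^ 2 * μ2 i ≤ 15 * E := by
    intro i
    set r2 := (if 0 < μ2 i then a2 i / μ2 i else 1) with hr2def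
    set r1 := (if 0 < μ1 i then a1 i / μ1 i else 1) with hr1def
    have hr2 : r2 ∈ Set.Icc (0:ℝ) 1 := hr _ _ (hμ2 i) (ha2 i)
    have hr1 : r1 ∈ Set.Icc (0:ℝ) 1 := hr _ _ (hμ1 i) (ha1 i)
    have hti := hεi i
    rcases le_or_gt (μ2 i) (2 * E) with hcase | hcase
    · -- small μ2 : term ≤ μ2 ≤ 2E
      have h1 : (r2 - r1) ^ 2 ≤ 1 := by nlinarith [hr2.1, hr2.2, hr1.1, hr1.2]
      calc (r2 - r1) ^ 2 * μ2 i ≤ 1 * μ2 i :=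
            mul_le_mul_of_nonneg_right h1 (hμ2 i).1
        _ = μ2 i := one_mul _
        _ ≤ 2 * E := hcase
        _ ≤ 15 * E := by linarith
    · -- large μ2
      rcases eq_or_lt_of_le hE0 with hEz | hEpos
      · -- E = 0 hence ε = 0, everything equal
        have hεz : ε = 0 := le_antisymm (hεE.trans hEz.symm.le) hε0
        have h1 : |a2 i - a1 i| = 0 := by
          have := abs_nonneg (a2 i - a1 i); have := abs_nonneg (μ2 i - μ1 i); linarith
        have h2 : |μ2 i - μ1 i| = 0 := by
          have := abs_nonneg (a2 i - a1 i); have := abs_nonneg (μ2 i - μ1 i); linarith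
        have ha : a2 i = a1 i := by have := abs_eq_zero.mp h1; linarith
        have hμ : μ2 i = μ1 i := by have := abs_eq_zero.mp h2; linarith
        have : r2 = r1 := by rw [hr2def, hr1def, ha, hμ]
        rw [this]
        simp [← hEz]
      · have h2pos : 0 < μ2 i := lt_of_le_of_lt (by positivity) hcase
        have hμ1E : E < μ1 i := by
          have h1 := abs_nonneg (a2 i - a1 i)
          have h2 := le_abs_self (μ2 i - μ1 i)
          linarith
        have h1pos : 0 < μ1 i := hEpos.trans hμ1E
        have hdiff : r2 - r1 = (a2 i * μ1 i - a1 i * μ2 i) / (μ1 i * μ2 i) := by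
          rw [hr2def, hr1def, if_pos h2pos, if_pos h1pos]
          field_simp
        have hDabs : |a2 i * μ1 i - a1 i * μ2 i| ≤ ε := by
          have h3 : a2 i * μ1 i - a1 i * μ2 i
              = (a2 i - a1 i) * μ1 i + a1 i * (μ1 i - μ2 i) := by ring
          have h4 := abs_add_le ((a2 i - a1 i) * μ1 i) (a1 i * (μ1 i - μ2 i))
          rw [abs_mul, abs_mul] at h4
          have h5 : |μ1 i| = μ1 i := abs_of_nonneg (hμ1 i).1
          have h6 : |a1 i| = a1 i := abs_of_nonneg (ha1 i).1
          have h7 : |μ1 i - μ2 i| = |μ2 i - μ1 i| := abs_sub_comm _ _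
          rw [h5, h6, h7] at h4
          have h8 : |a2 i - a1 i| * μ1 i ≤ |a2 i - a1 i| * 1 :=
            mul_le_mul_of_nonneg_left (hμ1 i).2 (abs_nonneg _)
          have h9 : a1 i * |μ2 i - μ1 i| ≤ 1 * |μ2 i - μ1 i| :=
            mul_le_mul_of_nonneg_right (le_trans (ha1 i).2 (hμ1 i).2) (abs_nonneg _)
          rw [h3]
          linarith
        have hD : (a2 i * μ1 i - a1 i * μ2 i) ^ 2 ≤ ε ^ 2 := by
          have := sq_abs (a2 i * μ1 i - a1 i * μ2 i)
          nlinarith [abs_nonneg (a2 i * μ1 i - a1 i * μ2 i)]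
        have hprod : 2 * E ^ 2 ≤ μ1 i * μ2 i := by nlinarith
        have hε2 : ε ^ 2 ≤ E ^ 5 := by
          have : ε ^ 2 = E ^ 5 * E ^ 3 := by rw [← hE4]; ring
          nlinarith [pow_nonneg hE0 3, pow_nonneg hE0 5, pow_le_one₀ hE0 hE1 (n := 3)]
        rw [hdiff, div_pow, div_mul_eq_mul_div, div_le_iff₀ (by positivity)]
        have hsq : 4 * E ^ 4 ≤ (μ1 i * μ2 i) ^ 2 := by
          nlinarith [pow_nonneg hE0 2]
        have hL : (a2 i * μ1 i - a1 i * μ2 i) ^ 2 * μ2 i ≤ E ^ 5 := by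
          have : (a2 i * μ1 i - a1 i * μ2 i) ^ 2 * μ2 i ≤ ε ^ 2 * 1 :=
            mul_le_mul hD (hμ2 i).2 (hμ2 i).1 (sq_nonneg ε)
          linarith
        have hR : 60 * E ^ 5 ≤ 15 * E * (μ1 i * μ2 i) ^ 2 := by
          calc 60 * E ^ 5 = 15 * E * (4 * E ^ 4) := by ring
            _ ≤ 15 * E * (μ1 i * μ2 i) ^ 2 :=
              mul_le_mul_of_nonneg_left hsq (by positivity)
        have hE5 : 0 ≤ E ^ 5 := pow_nonneg hE0 5
        linarith
  calc (∑ i, ((if 0 < μ2 i then a2 i / μ2 i else 1) -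
        (if 0 < μ1 i then a1 i / μ1 i else 1)) ^ 2 * μ2 i)
      ≤ ∑ _i : Fin m, 15 * E := Finset.sum_le_sum (fun i _ => key i)
    _ = m * (15 * E) := by rw [Finset.sum_const, Finset.card_univ, Fintype.card_fin, nsmul_eq_mul]
    _ = 15 * m * E := by ring
end
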